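/- Within reflexive graphs under the surjective strong homomorphism ordering, the avoidance class Av(N_{3,1}) is well quasi-ordered; indeed Av(N_{3,1}) is contained in the class of graphs that are disjoint unions of a complete graph and an empty graph. -/

import Mathlib

/-- A finite structure with a single binary relation (digraph/graph model). -/
structure FinBinRel where
  n : ℕ
  rel : Fin n → Fin n → Prop

/-- `f` is a homomorphism from `A` to `B`: it maps related pairs to related pairs. -/
def IsHom (A B : FinBinRel) (f : Fin A.n → Fin B.n) : Prop :=
  ∀ x y, A.rel x y → B.rel (f x) (f y)

/-- `f` is a strong homomorphism: a homomorphism such that every related pair of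
elements of the image is the image of a related pair. -/
def IsStrongHom (A B : FinBinRel) (f : Fin A.n → Fin B.n) : Prop :=
  IsHom A B f ∧
    ∀ p q : Fin B.n, B.rel p q → (∃ a, f a = p) → (∃ b, f b = q) →
      ∃ u v, A.rel u v ∧ f u = p ∧ f v = q

/-- Homomorphic image ordering: `A ⪯ B` iff there is a surjective homomorphism `B → A`. -/
def HomLe (A B : FinBinRel) : Prop :=
  ∃ f : Fin B.n → Fin A.n, Function.Surjective f ∧ IsHom B A f

/-- Strong homomorphic image ordering: `A ⪯ B` iff there is a surjective strong
homomorphism `B → A`. -/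
def StrongLe (A B : FinBinRel) : Prop :=
  ∃ f : Fin B.n → Fin A.n, Function.Surjective f ∧ IsStrongHom B A f

/-- Isomorphism of binary relational structures. -/
def BinIso (A B : FinBinRel) : Prop :=
  ∃ e : Fin A.n ≃ Fin B.n, ∀ x y, A.rel x y ↔ B.rel (e x) (e y)

/-- A class `C` is well quasi-ordered by `r`: every infinite sequence of members of `C`
contains a "good pair". (For orderings on finite structures respecting size this is
equivalent to having no infinite antichain.) -/
def IsWqo (r : FinBinRel → FinBinRel → Prop) (C : Set FinBinRel) : Prop :=
  ∀ f : ℕ → FinBinRel, (∀ i, f i ∈ C) → ∃ i j, i < j ∧ r (f i) (f j)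

/-- A reflexive graph: symmetric relation with a loop at every vertex. -/
def ReflGraph (A : FinBinRel) : Prop :=
  (∀ x, A.rel x x) ∧ (∀ x y, A.rel x y → A.rel y x)

/-- An irreflexive graph: symmetric and loopless. -/
def IrrGraph (A : FinBinRel) : Prop :=
  (∀ x, ¬ A.rel x x) ∧ (∀ x y, A.rel x y → A.rel y x)

/-- The irreflexive complete graph on `n` vertices. -/
def Kirr (n : ℕ) : FinBinRel := ⟨n, fun i j => i ≠ j⟩

/-- The complete reflexive graph/digraph on `n` vertices (all pairs, including loops). -/
def Kcompl (n : ℕ) : FinBinRel := ⟨n, fun _ _ => True⟩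

/-- The subcomplete reflexive graph `N_{n,k}` (for `2k ≤ n`): the complete reflexive
graph on `n` vertices with the `k` disjoint edges `{0,1},{2,3},…,{2k-2,2k-1}` deleted. -/
def Ngraph (n k : ℕ) : FinBinRel :=
  ⟨n, fun i j => ¬ ∃ m, m < k ∧
      ((i.val = 2 * m ∧ j.val = 2 * m + 1) ∨ (j.val = 2 * m ∧ i.val = 2 * m + 1))⟩

/-- The subcomplete digraph `N⃗_{n,k}` (for `2k ≤ n`): the complete reflexive digraph
on `n` vertices with the `k` disjoint directed edges `(0,1),(2,3),…,(2k-2,2k-1)` removed. -/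
def Ndigraph (n k : ℕ) : FinBinRel :=
  ⟨n, fun i j => ¬ ∃ m, m < k ∧ i.val = 2 * m ∧ j.val = 2 * m + 1⟩

/-- `D` has a set of `k` pairwise disjoint edges (all `2k` endpoints distinct). -/
def HasDisjointEdges (D : FinBinRel) (k : ℕ) : Prop :=
  ∃ a b : Fin k → Fin D.n,
    Function.Injective (Sum.elim a b) ∧ ∀ i, D.rel (a i) (b i)

/-- Within reflexive graphs under the strong homomorphic image ordering, `Av(N_{3,1})` is
well quasi-ordered; indeed it is contained in the class of graphs that are disjoint
unions of a complete graph and an empty graph. -/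

private lemma exists_surj_of_card_le' {α β : Type} [Finite α] [Finite β]
    (hne : Nonempty α) (h : Nat.card α ≤ Nat.card β) :
    ∃ g : β → α, Function.Surjective g := by
  classical
  haveI : Fintype α := Fintype.ofFinite α
  haveI : Fintype β := Fintype.ofFinite β
  rw [Nat.card_eq_fintype_card, Nat.card_eq_fintype_card] at h
  obtain ⟨e⟩ := Function.Embedding.nonempty_of_card_le h
  exact ⟨Function.invFun e, Function.invFun_surjective e.injective⟩

private lemma strongLe_of_empty' (A B : FinBinRel) (hA : A.n = 0) (hB : B.n = 0) :
    StrongLe A B := by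
  refine ⟨fun x => ⟨x.val, by omega⟩, ?_, ?_, ?_⟩
  · intro p; exact absurd p.isLt (by omega)
  · intro x; exact absurd x.isLt (by omega)
  · intro p; exact absurd p.isLt (by omega)

private lemma lemmaB' (H1 H2 : FinBinRel) (h1 : ReflGraph H1) (h2 : ReflGraph H2)
    (C1 : Set (Fin H1.n)) (C2 : Set (Fin H2.n))
    (clq1 : ∀ x ∈ C1, ∀ y ∈ C1, H1.rel x y)
    (ind1 : ∀ x, x ∉ C1 → ∀ y, y ∉ C1 → x ≠ y → ¬ H1.rel x y)
    (crs1 : ∀ x ∈ C1, ∀ y, y ∉ C1 → ¬ H1.rel x y)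
    (clq2 : ∀ x ∈ C2, ∀ y ∈ C2, H2.rel x y)
    (ind2 : ∀ x, x ∉ C2 → ∀ y, y ∉ C2 → x ≠ y → ¬ H2.rel x y)
    (crs2 : ∀ x ∈ C2, ∀ y, y ∉ C2 → ¬ H2.rel x y)
    (hc : Nat.card {x // x ∈ C1} ≤ Nat.card {x // x ∈ C2})
    (hd : Nat.card {x // x ∉ C1} ≤ Nat.card {x // x ∉ C2}) :
    H1.n = 0 ∨ StrongLe H1 H2 := by
  classical
  by_cases h1n : H1.n = 0
  · exact Or.inl h1n
  right
  have p0 : Fin H1.n := ⟨0, Nat.pos_of_ne_zero h1n⟩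
  obtain ⟨sC, hsC1, hsC2⟩ : ∃ sC : {x // x ∈ C2} → Fin H1.n,
      (∀ u v, H1.rel (sC u) (sC v)) ∧ (∀ p ∈ C1, ∃ u, sC u = p) := by
    by_cases hne : Nonempty {x // x ∈ C1}
    · obtain ⟨s, hs⟩ := exists_surj_of_card_le' hne hc
      refine ⟨fun u => (s u).1, fun u v => clq1 _ (s u).2 _ (s v).2, fun p hp => ?_⟩
      obtain ⟨u, hu⟩ := hs ⟨p, hp⟩
      exact ⟨u, congrArg Subtype.val hu⟩
    · exact ⟨fun _ => p0, fun _ _ => h1.1 p0, fun p hp => absurd ⟨⟨p, hp⟩⟩ hne⟩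
  obtain ⟨sR, hsR2⟩ : ∃ sR : {x // x ∉ C2} → Fin H1.n, (∀ p, p ∉ C1 → ∃ u, sR u = p) := by
    by_cases hne : Nonempty {x // x ∉ C1}
    · obtain ⟨s, hs⟩ := exists_surj_of_card_le' hne hd
      refine ⟨fun u => (s u).1, fun p hp => ?_⟩
      obtain ⟨u, hu⟩ := hs ⟨p, hp⟩
      exact ⟨u, congrArg Subtype.val hu⟩
    · exact ⟨fun _ => p0, fun p hp => absurd ⟨⟨p, hp⟩⟩ hne⟩
  set g : Fin H2.n → Fin H1.n :=
    fun x => if h : x ∈ C2 then sC ⟨x, h⟩ else sR ⟨x, h⟩ with hg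
  have hsurj : Function.Surjective g := by
    intro p
    by_cases hp : p ∈ C1
    · obtain ⟨u, hu⟩ := hsC2 p hp
      exact ⟨u.1, by simp [hg, u.2, hu]⟩
    · obtain ⟨u, hu⟩ := hsR2 p hp
      exact ⟨u.1, by simp [hg, u.2, hu]⟩
  refine ⟨g, hsurj, ?_, ?_⟩
  · intro u v huv
    by_cases hu : u ∈ C2 <;> by_cases hv : v ∈ C2
    · simp only [hg, dif_pos hu, dif_pos hv]; exact hsC1 _ _
    · exact absurd huv (crs2 u hu v hv)
    · exact absurd (h2.2 _ _ huv) (crs2 v hv u hu)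
    · by_cases huv' : u = v
      · subst huv'; exact h1.1 _
      · exact absurd huv (ind2 u hu v hv huv')
  · intro p q hpq _ _
    by_cases hpq' : p = q
    · subst hpq'
      obtain ⟨u, hu⟩ := hsurj p
      exact ⟨u, u, h2.1 u, hu, hu⟩
    · have hp : p ∈ C1 := by
        by_contra hp
        by_cases hq : q ∈ C1
        · exact crs1 q hq p hp (h1.2 _ _ hpq)
        · exact ind1 p hp q hq hpq' hpq
      have hq : q ∈ C1 := by
        by_contra hq
        exact crs1 p hp q hq hpq
      obtain ⟨u, hu⟩ := hsC2 p hp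
      obtain ⟨v, hv⟩ := hsC2 q hq
      exact ⟨u.1, v.1, clq2 _ u.2 _ v.2, by simp [hg, u.2, hu], by simp [hg, v.2, hv]⟩

private lemma part2' (H : FinBinRel) (hR : ReflGraph H) (hav : ¬ StrongLe (Ngraph 3 1) H) :
    ∃ C : Set (Fin H.n),
      (∀ x ∈ C, ∀ y ∈ C, H.rel x y) ∧
      (∀ x, x ∉ C → ∀ y, y ∉ C → x ≠ y → ¬ H.rel x y) ∧
      (∀ x ∈ C, ∀ y, y ∉ C → ¬ H.rel x y) := by
  classical
  refine ⟨{x | ∃ y, y ≠ x ∧ H.rel x y}, ?_, ?_, ?_⟩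
  · rintro x ⟨z, hzx, hxz⟩ y ⟨w, hwy, hyw⟩
    by_cases hxy : x = y
    · subst hxy; exact hR.1 x
    by_contra hrel
    apply hav
    have hzy : z ≠ y := fun h => hrel (h ▸ hxz)
    have hwx : w ≠ x := fun h => hrel (hR.2 _ _ (h ▸ hyw))
    have hyx : y ≠ x := fun h => hxy h.symm
    refine ⟨fun u => if u = x then ⟨0, by norm_num [Ngraph]⟩
        else if u = y then ⟨1, by norm_num [Ngraph]⟩ else ⟨2, by norm_num [Ngraph]⟩,
        ?_, ?_, ?_⟩
    · intro p
      fin_cases p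
      · exact ⟨x, by simp⟩
      · exact ⟨y, by simp [hyx]⟩
      · exact ⟨z, by simp [hzx, hzy]⟩
    · intro u v huv
      show ¬ ∃ m, _
      rintro ⟨m, hm, hcase⟩
      interval_cases m
      rcases hcase with ⟨h0, h1⟩ | ⟨h0, h1⟩
      · have hu : u = x := by
          by_contra h; by_cases h' : u = y <;> simp [h, h', hyx] at h0
        have hv : v = y := by
          by_contra h
          by_cases h' : v = x
          · simp [h'] at h1
          · simp [h', h] at h1
        exact hrel (hu ▸ hv ▸ huv)
      · have hv : v = x := by
          by_contra h; by_cases h' : v = y <;> simp [h, h', hyx] at h0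
        have hu : u = y := by
          by_contra h
          by_cases h' : u = x
          · simp [h'] at h1
          · simp [h', h] at h1
        exact hrel (hR.2 _ _ (hu ▸ hv ▸ huv))
    · intro p q hpq _ _
      fin_cases p <;> fin_cases q
      · exact ⟨x, x, hR.1 x, by simp, by simp⟩
      · exact absurd hpq (by simp [Ngraph])
      · exact ⟨x, z, hxz, by simp, by simp [hzx, hzy]⟩
      · exact absurd hpq (by simp [Ngraph])
      · exact ⟨y, y, hR.1 y, by simp [hyx], by simp [hyx]⟩
      · exact ⟨y, w, hyw, by simp [hyx], by simp [hwx, hwy]⟩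
      · exact ⟨z, x, hR.2 _ _ hxz, by simp [hzx, hzy], by simp⟩
      · exact ⟨w, y, hR.2 _ _ hyw, by simp [hwx, hwy], by simp [hyx]⟩
      · exact ⟨z, z, hR.1 z, by simp [hzx, hzy], by simp [hzx, hzy]⟩
  · rintro x hx y hy hxy hrel
    exact hx ⟨y, fun h => hxy h.symm, hrel⟩
  · rintro x hx y hy hrel
    have hxy : x ≠ y := fun h => hy (h ▸ hx)
    exact hy ⟨x, hxy, hR.2 _ _ hrel⟩

theorem stmt_13 :
    IsWqo StrongLe {H | ReflGraph H ∧ ¬ StrongLe (Ngraph 3 1) H} ∧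
    (∀ H : FinBinRel, ReflGraph H → ¬ StrongLe (Ngraph 3 1) H →
      ∃ C : Set (Fin H.n),
        (∀ x ∈ C, ∀ y ∈ C, H.rel x y) ∧
        (∀ x, x ∉ C → ∀ y, y ∉ C → x ≠ y → ¬ H.rel x y) ∧
        (∀ x ∈ C, ∀ y, y ∉ C → ¬ H.rel x y)) := by
  constructor
  · intro f hf
    choose C hclq hind hcrs using fun i => part2' (f i) (hf i).1 (hf i).2
    by_cases hemp : ∃ i j, i < j ∧ (f i).n = 0 ∧ (f j).n = 0
    · obtain ⟨i, j, hij, hi, hj⟩ := hemp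
      exact ⟨i, j, hij, strongLe_of_empty' _ _ hi hj⟩
    · push_neg at hemp
      have hN : ∃ N, ∀ i, N ≤ i → (f i).n ≠ 0 := by
        by_cases h0 : ∃ i, (f i).n = 0
        · obtain ⟨i0, hi0⟩ := h0
          refine ⟨i0 + 1, fun i hi h => ?_⟩
          exact hemp i0 i (by omega) hi0 h
        · push_neg at h0; exact ⟨0, fun i _ => h0 i⟩
      obtain ⟨N, hN⟩ := hN
      have h1 : (Set.univ : Set ℕ).IsPWO := (Set.isWF_univ_iff.2 inferInstance).isPWO
      obtain ⟨i, j, hij, hle⟩ := Set.partiallyWellOrderedOn_iff_exists_lt.1 (h1.prod h1)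
        (fun n => ((Nat.card {x // x ∈ C (N + n)}, Nat.card {x // x ∉ C (N + n)}) : ℕ × ℕ))
        (by simp)
      rcases lemmaB' (f (N + i)) (f (N + j)) (hf _).1 (hf _).1 (C (N + i)) (C (N + j))
          (hclq _) (hind _) (hcrs _) (hclq _) (hind _) (hcrs _) hle.1 hle.2 with h | h
      · exact absurd h (hN _ (by omega))
      · exact ⟨N + i, N + j, by omega, h⟩
  · exact fun H hR hav => part2' H hR hav
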